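/- Let Q_t be the T/N-periodic switching field and Q̃ the averaged field as above, let z be the solution of z' = Q_t(z) with z(0) ∈ B_r(0), and suppose |z'(t)| ≤ X a.e. on [0,T]. Then for every t ∈ [0,T], the averaging defect satisfies |∫₀ᵗ Q_τ(z(τ)) dτ − ∫₀ᵗ Q̃(z(τ)) dτ| ≤ 2(T/N) X + K̃ X T²/(2N), where K̃ = m sup_i K‖A_i‖‖W_i‖. -/

import Mathlib

open Metric Set MeasureTheory intervalIntegral
open scoped Interval

noncomputable def actVec (d : ℕ) (σ : ℝ → ℝ) (v : PiLp 1 (fun _ : Fin d => ℝ)) :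
    PiLp 1 (fun _ : Fin d => ℝ) :=
  WithLp.toLp 1 (fun i => σ (v i))

lemma actVec_lip (d : ℕ) (σ : ℝ → ℝ) (K : ℝ)
    (hσ : ∀ x y : ℝ, |σ x - σ y| ≤ K * |x - y|)
    (u v : PiLp 1 (fun _ : Fin d => ℝ)) :
    ‖actVec d σ u - actVec d σ v‖ ≤ K * ‖u - v‖ := by
  have hp : (0:ℝ) < (1 : ENNReal).toReal := by simp
  rw [PiLp.norm_eq_sum hp, PiLp.norm_eq_sum hp]
  simp only [ENNReal.toReal_one, Real.rpow_one, one_div, inv_one]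
  rw [Finset.mul_sum]
  apply Finset.sum_le_sum
  intro i _
  simpa [actVec, Real.norm_eq_abs] using hσ (u i) (v i)

lemma integral_abs_sub_eq (a b c : ℝ) (h1 : a ≤ c) (h2 : c ≤ b) :
    ∫ s in a..b, |c - s| = ((c - a) ^ 2 + (b - c) ^ 2) / 2 := by
  have hint : ∀ u v : ℝ, IntervalIntegrable (fun s => |c - s|) volume u v :=
    fun u v => (Continuous.abs (by continuity)).intervalIntegrable u v
  have hi1 : ∫ s in a..c, |c - s| = ∫ s in a..c, (c - s) := by
    apply intervalIntegral.integral_congr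
    intro s hs
    rw [uIcc_of_le h1] at hs
    exact abs_of_nonneg (by linarith [hs.2])
  have hi2 : ∫ s in c..b, |c - s| = ∫ s in c..b, (s - c) := by
    apply intervalIntegral.integral_congr
    intro s hs
    rw [uIcc_of_le h2] at hs
    show |c - s| = s - c
    rw [abs_sub_comm]  -- dummy
    exact abs_of_nonneg (by linarith [hs.1])
  rw [← intervalIntegral.integral_add_adjacent_intervals (hint a c) (hint c b), hi1, hi2,
    intervalIntegral.integral_sub intervalIntegrable_const intervalIntegral.intervalIntegrable_id,
    intervalIntegral.integral_sub intervalIntegral.intervalIntegrable_id intervalIntegrable_const,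
    integral_id, integral_id, intervalIntegral.integral_const, intervalIntegral.integral_const]
  simp only [smul_eq_mul]
  ring

set_option maxHeartbeats 2000000 in
theorem averaging_defect_bound
    (d m N : ℕ) (hm : 0 < m) (hN : 0 < N) (T r X : ℝ) (hT : 0 < T) (hr : 0 < r)
    (σ : ℝ → ℝ) (K : ℝ)
    (hσ : ∀ x y : ℝ, |σ x - σ y| ≤ K * |x - y|)
    (A W : Fin m → (PiLp 1 (fun _ : Fin d => ℝ) →L[ℝ] PiLp 1 (fun _ : Fin d => ℝ)))
    (b : Fin m → PiLp 1 (fun _ : Fin d => ℝ))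
    (Q : ℝ → PiLp 1 (fun _ : Fin d => ℝ) → PiLp 1 (fun _ : Fin d => ℝ))
    (hQ : ∀ (n : ℕ) (i : Fin m),
      ∀ t ∈ Ico ((i : ℝ) * T / (m * N)) (((i : ℝ) + 1) * T / (m * N)),
        ∀ x, Q (t + n * T / N) x = (m : ℝ) • A i (actVec d σ (W i x + b i)))
    (z : ℝ → PiLp 1 (fun _ : Fin d => ℝ))
    (hz0 : z 0 ∈ ball (0 : PiLp 1 (fun _ : Fin d => ℝ)) r)
    (hz : ∀ t ∈ Icc (0:ℝ) T, HasDerivAt z (Q t (z t)) t)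
    (hX : ∀ᵐ t ∂(volume.restrict (Icc (0:ℝ) T)), ‖Q t (z t)‖ ≤ X) :
    ∀ t ∈ Icc (0:ℝ) T,
      ‖(∫ τ in (0:ℝ)..t, Q τ (z τ)) -
          ∫ τ in (0:ℝ)..t, ∑ i, A i (actVec d σ (W i (z τ) + b i))‖ ≤
        2 * (T / N) * X + ((m : ℝ) * ⨆ i, K * ‖A i‖ * ‖W i‖) * X * T ^ 2 / (2 * N) := by
  have hm0 : (0:ℝ) < m := by exact_mod_cast hm
  have hN0 : (0:ℝ) < N := by exact_mod_cast hN
  set P : ℝ := T / N with hPdef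
  have hP : 0 < P := div_pos hT hN0
  have hK0 : 0 ≤ K := by
    have h1 := hσ 0 1
    have h2 : (0:ℝ) ≤ |σ 0 - σ 1| := abs_nonneg _
    have h3 : |(0:ℝ) - 1| = 1 := by norm_num
    rw [h3] at h1
    linarith
  set F : Fin m → PiLp 1 (fun _ : Fin d => ℝ) → PiLp 1 (fun _ : Fin d => ℝ) :=
    fun i x => A i (actVec d σ (W i x + b i)) with hFdef
  set Qt : PiLp 1 (fun _ : Fin d => ℝ) → PiLp 1 (fun _ : Fin d => ℝ) :=
    fun x => ∑ i, F i x with hQtdef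
  set K' : ℝ := ⨆ i, K * ‖A i‖ * ‖W i‖ with hK'def
  haveI : Nonempty (Fin m) := ⟨⟨0, hm⟩⟩
  have hK'i : ∀ i, K * ‖A i‖ * ‖W i‖ ≤ K' := by
    intro i
    rw [hK'def]
    exact le_ciSup (f := fun i => K * ‖A i‖ * ‖W i‖)
      (Set.Finite.bddAbove (Set.finite_range _)) i
  have hK'0 : (0:ℝ) ≤ K' := le_trans (by positivity) (hK'i ⟨0, hm⟩)
  set Kt : ℝ := (m:ℝ) * K' with hKtdef
  have hKt0 : 0 ≤ Kt := mul_nonneg hm0.le hK'0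
  set L : ℝ := T / (m * N) with hLdef
  have hL : 0 < L := div_pos hT (by positivity)
  have hLP : (m:ℝ) * L = P := by rw [hLdef, hPdef]; field_simp
  -- Lipschitz bounds
  have hFlip : ∀ i x y, ‖F i x - F i y‖ ≤ K * ‖A i‖ * ‖W i‖ * ‖x - y‖ := by
    intro i x y
    have h1 : F i x - F i y = A i (actVec d σ (W i x + b i) - actVec d σ (W i y + b i)) := by
      simp only [hFdef, map_sub]
    rw [h1]
    have h2 := (A i).le_opNorm (actVec d σ (W i x + b i) - actVec d σ (W i y + b i))
    have h3 := actVec_lip d σ K hσ (W i x + b i) (W i y + b i)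
    have h4 : (W i x + b i) - (W i y + b i) = W i (x - y) := by rw [map_sub]; abel
    rw [h4] at h3
    have h5 := (W i).le_opNorm (x - y)
    have hA0 : (0:ℝ) ≤ ‖A i‖ := norm_nonneg _
    calc ‖A i (actVec d σ (W i x + b i) - actVec d σ (W i y + b i))‖
        ≤ ‖A i‖ * ‖actVec d σ (W i x + b i) - actVec d σ (W i y + b i)‖ := h2
      _ ≤ ‖A i‖ * (K * ‖W i (x - y)‖) := mul_le_mul_of_nonneg_left h3 hA0
      _ ≤ ‖A i‖ * (K * (‖W i‖ * ‖x - y‖)) :=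
          mul_le_mul_of_nonneg_left (mul_le_mul_of_nonneg_left h5 hK0) hA0
      _ = K * ‖A i‖ * ‖W i‖ * ‖x - y‖ := by ring
  have hFlip' : ∀ i x y, ‖F i x - F i y‖ ≤ K' * ‖x - y‖ :=
    fun i x y => le_trans (hFlip i x y) (mul_le_mul_of_nonneg_right (hK'i i) (norm_nonneg _))
  have hQtlip : ∀ x y, ‖Qt x - Qt y‖ ≤ Kt * ‖x - y‖ := by
    intro x y
    have h1 : Qt x - Qt y = ∑ i, (F i x - F i y) := by
      simp only [hQtdef, Finset.sum_sub_distrib]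
    rw [h1]
    calc ‖∑ i, (F i x - F i y)‖ ≤ ∑ i, ‖F i x - F i y‖ := norm_sum_le _ _
      _ ≤ ∑ _i : Fin m, K' * ‖x - y‖ := Finset.sum_le_sum fun i _ => hFlip' i x y
      _ = Kt * ‖x - y‖ := by
          rw [Finset.sum_const, Finset.card_univ, Fintype.card_fin, nsmul_eq_mul, hKtdef]; ring
  -- representation of Q
  have hrep : ∀ s : ℝ, 0 ≤ s → ∃ i : Fin m, ∀ x, Q s x = (m:ℝ) • F i x := by
    intro s hs
    set n := ⌊s / P⌋₊ with hn
    have hfl : (n:ℝ) ≤ s / P := Nat.floor_le (div_nonneg hs hP.le)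
    have hn1 : (n:ℝ) * P ≤ s := by
      have := mul_le_mul_of_nonneg_right hfl hP.le
      rwa [div_mul_cancel₀ s hP.ne'] at this
    have hfl2 : s / P < (n:ℝ) + 1 := Nat.lt_floor_add_one (s / P)
    have hn2 : s < ((n:ℝ) + 1) * P := by
      have := mul_lt_mul_of_pos_right hfl2 hP
      rwa [div_mul_cancel₀ s hP.ne'] at this
    set t' := s - n * P with ht'
    have ht'0 : 0 ≤ t' := by simp only [ht']; linarith
    have ht'P : t' < P := by simp only [ht']; linarith
    set i' := ⌊t' / L⌋₊ with hi'
    have hi'm : i' < m := by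
      have h1 : t' / L < m := by
        rw [div_lt_iff₀ hL]
        calc t' < P := ht'P
          _ = (m:ℝ) * L := hLP.symm
          _ = (m:ℝ) * L := rfl
      exact_mod_cast (Nat.floor_lt (div_nonneg ht'0 hL.le)).2 (by exact_mod_cast h1)
    have hifl : (i':ℝ) ≤ t' / L := Nat.floor_le (div_nonneg ht'0 hL.le)
    have hifl2 : t' / L < (i':ℝ) + 1 := Nat.lt_floor_add_one (t' / L)
    have hlow : (i':ℝ) * L ≤ t' := by
      have := mul_le_mul_of_nonneg_right hifl hL.le
      rwa [div_mul_cancel₀ t' hL.ne'] at this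
    have hhigh : t' < ((i':ℝ) + 1) * L := by
      have := mul_lt_mul_of_pos_right hifl2 hL
      rwa [div_mul_cancel₀ t' hL.ne'] at this
    have hmem : t' ∈ Ico (((⟨i', hi'm⟩ : Fin m) : ℝ) * T / (m * N))
        ((((⟨i', hi'm⟩ : Fin m) : ℝ) + 1) * T / (m * N)) := by
      constructor
      · show ((i':ℝ)) * T / (m * N) ≤ t'
        calc ((i':ℝ)) * T / (m * N) = (i':ℝ) * L := by rw [hLdef]; ring
          _ ≤ t' := hlow
      · show t' < ((i':ℝ) + 1) * T / (m * N)
        calc t' < ((i':ℝ) + 1) * L := hhigh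
          _ = ((i':ℝ) + 1) * T / (m * N) := by rw [hLdef]; ring
    refine ⟨⟨i', hi'm⟩, fun x => ?_⟩
    have hQx := hQ n ⟨i', hi'm⟩ t' hmem x
    have hts : t' + (n:ℝ) * T / N = s := by simp only [ht', hPdef]; ring
    rw [hts] at hQx
    exact hQx
  have hQlip : ∀ s, 0 ≤ s → ∀ x y, ‖Q s x - Q s y‖ ≤ Kt * ‖x - y‖ := by
    intro s hs x y
    obtain ⟨i, hi⟩ := hrep s hs
    rw [hi x, hi y, ← smul_sub, norm_smul, Real.norm_eq_abs, abs_of_nonneg hm0.le]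
    calc (m:ℝ) * ‖F i x - F i y‖ ≤ (m:ℝ) * (K' * ‖x - y‖) :=
        mul_le_mul_of_nonneg_left (hFlip' i x y) hm0.le
      _ = Kt * ‖x - y‖ := by rw [hKtdef]; ring
  -- X is nonnegative
  have hX0 : 0 ≤ X := by
    have hne : volume.restrict (Icc (0:ℝ) T) ≠ 0 := by
      intro h0
      rw [Measure.restrict_eq_zero] at h0
      rw [Real.volume_Icc] at h0
      simp only [ENNReal.ofReal_eq_zero] at h0
      linarith
    haveI : Filter.NeBot (ae (volume.restrict (Icc (0:ℝ) T))) := ae_neBot.2 hne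
    obtain ⟨τ, hτ⟩ := hX.exists
    exact le_trans (norm_nonneg _) hτ
  set g : ℝ → PiLp 1 (fun _ : Fin d => ℝ) := fun τ => Q τ (z τ) with hgdef
  have hgae : AEStronglyMeasurable g (volume.restrict (Icc (0:ℝ) T)) := by
    apply (stronglyMeasurable_deriv z).aestronglyMeasurable.congr
    filter_upwards [ae_restrict_mem measurableSet_Icc] with τ hτ
    exact (hz τ hτ).deriv
  have hgint : IntegrableOn g (Icc (0:ℝ) T) volume := by
    exact Integrable.mono' (integrableOn_const measure_Icc_lt_top.ne) hgae hX
  have hsubIcc : ∀ {u v : ℝ}, u ∈ Icc (0:ℝ) T → v ∈ Icc (0:ℝ) T →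
      uIcc u v ⊆ Icc (0:ℝ) T := by
    intro u v hu hv
    exact uIcc_subset_Icc hu hv
  have hsubIoc : ∀ {u v : ℝ}, u ∈ Icc (0:ℝ) T → v ∈ Icc (0:ℝ) T →
      Ι u v ⊆ Icc (0:ℝ) T := by
    intro u v hu hv
    exact uIoc_subset_uIcc.trans (uIcc_subset_Icc hu hv)
  have hgii : ∀ u v, u ∈ Icc (0:ℝ) T → v ∈ Icc (0:ℝ) T →
      IntervalIntegrable g volume u v := by
    intro u v hu hv
    exact (hgint.mono_set (hsubIcc hu hv)).intervalIntegrable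
  have hQtc : Continuous Qt := by
    have hlw : LipschitzWith (Real.toNNReal Kt) Qt := by
      apply LipschitzWith.of_dist_le_mul
      intro x y
      rw [dist_eq_norm, dist_eq_norm]
      calc ‖Qt x - Qt y‖ ≤ Kt * ‖x - y‖ := hQtlip x y
        _ ≤ (Real.toNNReal Kt) * ‖x - y‖ :=
            mul_le_mul_of_nonneg_right (Real.le_coe_toNNReal Kt) (norm_nonneg _)
    exact hlw.continuous
  have hzc : ContinuousOn z (Icc (0:ℝ) T) :=
    fun τ hτ => ((hz τ hτ).continuousAt).continuousWithinAt
  have hGii : ∀ u v, u ∈ Icc (0:ℝ) T → v ∈ Icc (0:ℝ) T →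
      IntervalIntegrable (fun τ => Qt (z τ)) volume u v := by
    intro u v hu hv
    apply ContinuousOn.intervalIntegrable
    exact (hQtc.comp_continuousOn hzc).mono (hsubIcc hu hv)
  -- z is X-Lipschitz on [0,T]
  have hzlipP : ∀ u v, u ∈ Icc (0:ℝ) T → v ∈ Icc (0:ℝ) T → u ≤ v →
      ‖z v - z u‖ ≤ X * (v - u) := by
    intro u v hu hv huv
    have hftc : ∫ τ in u..v, g τ = z v - z u := by
      apply intervalIntegral.integral_eq_sub_of_hasDerivAt
      · intro τ hτ
        rw [uIcc_of_le huv] at hτ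
        exact hz τ ⟨le_trans hu.1 hτ.1, le_trans hτ.2 hv.2⟩
      · exact hgii u v hu hv
    rw [← hftc]
    have hb : ‖∫ τ in u..v, g τ‖ ≤ |∫ τ in u..v, X| := by
      apply intervalIntegral.norm_integral_le_abs_of_norm_le ?_ intervalIntegrable_const
      exact ae_mono (Measure.restrict_mono (hsubIoc hu hv) le_rfl) hX
    rw [intervalIntegral.integral_const, smul_eq_mul,
      abs_of_nonneg (mul_nonneg (by linarith) hX0)] at hb
    linarith [hb]
  have hzlip : ∀ u v, u ∈ Icc (0:ℝ) T → v ∈ Icc (0:ℝ) T →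
      ‖z v - z u‖ ≤ X * |v - u| := by
    intro u v hu hv
    rcases le_total u v with h | h
    · rw [abs_of_nonneg (by linarith)]
      exact hzlipP u v hu hv h
    · calc ‖z v - z u‖ = ‖z u - z v‖ := norm_sub_rev _ _
        _ ≤ X * (u - v) := hzlipP v u hv hu h
        _ = X * |v - u| := by rw [abs_of_nonpos (by linarith)]; ring
  -- on each switching subinterval, Q (·) c is a.e. constant
  have hpiece : ∀ (k j : ℕ) (hj : j < m) (c : PiLp 1 (fun _ : Fin d => ℝ)),
      IntervalIntegrable (fun τ => Q τ c) volume ((k:ℝ)*P + j*L) ((k:ℝ)*P + (j+1)*L) ∧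
      ∫ τ in ((k:ℝ)*P + j*L)..((k:ℝ)*P + (j+1)*L), Q τ c = L • ((m:ℝ) • F ⟨j, hj⟩ c) := by
    intro k j hj c
    set a : ℝ := (k:ℝ)*P + j*L with ha
    set bb : ℝ := (k:ℝ)*P + (j+1)*L with hbb
    have hab : a ≤ bb := by
      rw [ha, hbb]; nlinarith [hL]
    have haeq : ∀ᵐ τ ∂(volume.restrict (Ι a bb)), Q τ c = (m:ℝ) • F ⟨j, hj⟩ c := by
      have h1 : ∀ᵐ τ ∂(volume.restrict (Ι a bb)), τ ∈ Ι a bb :=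
        ae_restrict_mem measurableSet_uIoc
      have h2 : ∀ᵐ τ ∂(volume.restrict (Ι a bb)), τ ≠ bb := by
        refine (ae_iff).2 ?_
        have hset : {τ : ℝ | ¬ τ ≠ bb} = {bb} := by ext τ; simp
        rw [hset, Measure.restrict_apply (measurableSet_singleton bb)]
        exact le_antisymm (le_trans (measure_mono (inter_subset_left)) (by simp)) zero_le
      filter_upwards [h1, h2] with τ hτ1 hτ2
      rw [uIoc_of_le hab] at hτ1
      have hτbb : τ < bb := lt_of_le_of_ne hτ1.2 hτ2
      have hτa : a < τ := hτ1.1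
      have hmem : τ - (k:ℝ)*P ∈ Ico (((⟨j, hj⟩ : Fin m) : ℝ) * T / (m * N))
          ((((⟨j, hj⟩ : Fin m) : ℝ) + 1) * T / (m * N)) := by
        constructor
        · show ((j:ℝ)) * T / (m * N) ≤ τ - (k:ℝ)*P
          have : (j:ℝ) * T / (m * N) = (j:ℝ) * L := by rw [hLdef]; ring
          rw [this]
          rw [ha] at hτa; linarith
        · show τ - (k:ℝ)*P < ((j:ℝ) + 1) * T / (m * N)
          have : ((j:ℝ) + 1) * T / (m * N) = ((j:ℝ) + 1) * L := by rw [hLdef]; ring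
          rw [this]
          rw [hbb] at hτbb; linarith
      have hQx := hQ k ⟨j, hj⟩ (τ - (k:ℝ)*P) hmem c
      have hts : (τ - (k:ℝ)*P) + (k:ℝ) * T / N = τ := by rw [hPdef]; ring
      rw [hts] at hQx
      exact hQx
    have hfin : volume (Ι a bb) < ⊤ := by
      rw [uIoc_of_le hab, Real.volume_Ioc]
      exact ENNReal.ofReal_lt_top
    constructor
    · rw [intervalIntegrable_iff]
      exact (integrableOn_const hfin.ne).congr (haeq.mono fun τ h => h.symm)
    · have hcongr : ∫ τ in a..bb, Q τ c = ∫ _τ in a..bb, ((m:ℝ) • F ⟨j, hj⟩ c) := by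
        apply intervalIntegral.integral_congr_ae
        rw [← ae_restrict_iff' measurableSet_uIoc]
        exact haeq
      rw [hcongr, intervalIntegral.integral_const, smul_smul,
        show bb - a = L by rw [ha, hbb]; ring, ← smul_smul]
  -- integral of Q (·) c over one full period
  have hper : ∀ (k : ℕ) (c : PiLp 1 (fun _ : Fin d => ℝ)),
      IntervalIntegrable (fun τ => Q τ c) volume ((k:ℝ)*P) (((k:ℝ)+1)*P) ∧
      ∫ τ in ((k:ℝ)*P)..(((k:ℝ)+1)*P), Q τ c = P • Qt c := by
    intro k c
    set ν : ℕ → ℝ := fun j => (k:ℝ)*P + j*L with hν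
    have hνsucc : ∀ j : ℕ, ν (j+1) = (k:ℝ)*P + ((j:ℝ)+1)*L := by
      intro j; rw [hν]; push_cast; ring
    have hint : ∀ j < m, IntervalIntegrable (fun τ => Q τ c) volume (ν j) (ν (j+1)) := by
      intro j hj
      rw [hνsucc j]
      exact (hpiece k j hj c).1
    have hν0 : ν 0 = (k:ℝ)*P := by rw [hν]; push_cast; ring
    have hνm : ν m = ((k:ℝ)+1)*P := by
      rw [hν]
      show (k:ℝ)*P + (m:ℝ)*L = ((k:ℝ)+1)*P
      rw [hLP]; ring
    constructor
    · have := IntervalIntegrable.trans_iterate (a := ν) (n := m) hint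
      rwa [hν0, hνm] at this
    · have hsum := intervalIntegral.sum_integral_adjacent_intervals (a := ν) (μ := volume)
        (n := m) hint
      rw [hν0, hνm] at hsum
      rw [← hsum, ← Fin.sum_univ_eq_sum_range (fun j => ∫ τ in (ν j)..(ν (j+1)), Q τ c) m]
      have heach : ∀ i : Fin m,
          ∫ τ in (ν (i:ℕ))..(ν ((i:ℕ)+1)), Q τ c = P • F i c := by
        intro i
        rw [hνsucc (i:ℕ)]
        have h2 := (hpiece k (i:ℕ) i.isLt c).2
        rw [Fin.eta] at h2
        rw [h2, smul_smul, show L * (m:ℝ) = P by rw [← hLP]; ring]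
      rw [Finset.sum_congr rfl fun i _ => heach i, ← Finset.smul_sum]
  -- per-period averaging bound via midpoint freezing
  have hperiod : ∀ k : ℕ, ((k:ℝ)+1)*P ≤ T →
      ‖∫ τ in ((k:ℝ)*P)..(((k:ℝ)+1)*P), (g τ - Qt (z τ))‖ ≤ Kt * X * P^2 / 2 := by
    intro k hkT
    set a : ℝ := (k:ℝ)*P with ha
    set bb : ℝ := ((k:ℝ)+1)*P with hbb
    have hk0 : (0:ℝ) ≤ (k:ℝ) := Nat.cast_nonneg k
    have ha0 : 0 ≤ a := by rw [ha]; positivity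
    have hbA : bb = a + P := by rw [ha, hbb]; ring
    have hQcii0 := (hper k (z (a + P/2))).1
    have hzero0 := (hper k (z (a + P/2))).2
    rw [← ha, ← hbb] at hQcii0 hzero0
    clear_value a bb
    set mid : ℝ := a + P/2 with hmid
    set c := z mid with hc
    clear_value mid c
    have hab : a ≤ bb := by rw [hbA]; linarith [hP.le]
    have haI : a ∈ Icc (0:ℝ) T := ⟨ha0, le_trans hab hkT⟩
    have hbI : bb ∈ Icc (0:ℝ) T := ⟨le_trans ha0 hab, hkT⟩
    have hmidI : mid ∈ Icc (0:ℝ) T := by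
      constructor
      · rw [hmid]; linarith [hP.le]
      · rw [hmid]; rw [hbA] at hkT; linarith [hP.le]
    have hQcii : IntervalIntegrable (fun τ => Q τ c) volume a bb := hQcii0
    have hgiiab := hgii a bb haI hbI
    have hGiiab := hGii a bb haI hbI
    have hsplit : ∫ τ in a..bb, (g τ - Qt (z τ)) =
        (∫ τ in a..bb, ((g τ - Q τ c) + (Qt c - Qt (z τ)))) +
          ∫ τ in a..bb, (Q τ c - Qt c) := by
      rw [← intervalIntegral.integral_add
        ((hgiiab.sub hQcii).add (intervalIntegrable_const.sub hGiiab))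
        (hQcii.sub intervalIntegrable_const)]
      apply intervalIntegral.integral_congr
      intro τ _
      show g τ - Qt (z τ) = ((g τ - Q τ c) + (Qt c - Qt (z τ))) + (Q τ c - Qt c)
      abel
    have hzero : ∫ τ in a..bb, (Q τ c - Qt c) = 0 := by
      rw [intervalIntegral.integral_sub hQcii intervalIntegrable_const, hzero0,
        intervalIntegral.integral_const, show bb - a = P by rw [hbA]; ring, sub_self]
    rw [hsplit, hzero, add_zero]
    have hbound : ‖∫ τ in a..bb, ((g τ - Q τ c) + (Qt c - Qt (z τ)))‖ ≤
        abs (∫ τ in a..bb, (2*(Kt*X))*|mid - τ|) := by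
      apply intervalIntegral.norm_integral_le_abs_of_norm_le
      · filter_upwards [ae_restrict_mem measurableSet_uIoc] with τ hτ
        have hτ' : τ ∈ Icc a bb := by
          rw [uIoc_of_le hab] at hτ; exact Ioc_subset_Icc_self hτ
        have hτI : τ ∈ Icc (0:ℝ) T := ⟨le_trans haI.1 hτ'.1, le_trans hτ'.2 hbI.2⟩
        have h1 : ‖g τ - Q τ c‖ ≤ Kt * (X * |mid - τ|) := by
          calc ‖g τ - Q τ c‖ ≤ Kt * ‖z τ - c‖ := hQlip τ hτI.1 (z τ) c
            _ ≤ Kt * (X * |mid - τ|) := by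
                apply mul_le_mul_of_nonneg_left ?_ hKt0
                have h := hzlip mid τ hmidI hτI
                rw [abs_sub_comm τ mid] at h
                rw [hc]
                exact h
        have h2 : ‖Qt c - Qt (z τ)‖ ≤ Kt * (X * |mid - τ|) := by
          calc ‖Qt c - Qt (z τ)‖ ≤ Kt * ‖c - z τ‖ := hQtlip c (z τ)
            _ ≤ Kt * (X * |mid - τ|) := by
                apply mul_le_mul_of_nonneg_left ?_ hKt0
                have h := hzlip τ mid hτI hmidI
                rw [hc]
                exact h
        calc ‖(g τ - Q τ c) + (Qt c - Qt (z τ))‖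
            ≤ ‖g τ - Q τ c‖ + ‖Qt c - Qt (z τ)‖ := norm_add_le _ _
          _ ≤ 2*(Kt*X)*|mid - τ| := by linarith
      · exact ((continuous_const.mul
          ((continuous_const.sub continuous_id).abs)).intervalIntegrable a bb)
    have hcomp : ∫ τ in a..bb, (2*(Kt*X))*|mid - τ| = 2*(Kt*X)*(P^2/4) := by
      rw [intervalIntegral.integral_const_mul,
        integral_abs_sub_eq a bb mid (by rw [hmid]; linarith [hP.le])
          (by rw [hmid, hbA]; linarith [hP.le]),
        show mid - a = P/2 by rw [hmid]; ring,
        show bb - mid = P/2 by rw [hbA, hmid]; ring]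
      ring
    rw [hcomp] at hbound
    calc ‖∫ τ in a..bb, ((g τ - Q τ c) + (Qt c - Qt (z τ)))‖
        ≤ abs (2*(Kt*X)*(P^2/4)) := hbound
      _ = Kt * X * P^2 / 2 := by
          rw [abs_of_nonneg (by positivity)]
          ring
  -- bound on the averaged field along the trajectory inside a full period
  have htailQt : ∀ (k : ℕ), ((k:ℝ)+1)*P ≤ T → ∀ τ ∈ Icc ((k:ℝ)*P) (((k:ℝ)+1)*P),
      ‖Qt (z τ)‖ ≤ X + Kt * X * P / 2 := by
    intro k hkT τ hτ
    set a : ℝ := (k:ℝ)*P with ha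
    set bb : ℝ := ((k:ℝ)+1)*P with hbb
    have hk0 : (0:ℝ) ≤ (k:ℝ) := Nat.cast_nonneg k
    have ha0 : 0 ≤ a := by rw [ha]; positivity
    have hbA : bb = a + P := by rw [ha, hbb]; ring
    have hval := (hper k (z τ)).2
    rw [← ha, ← hbb] at hval
    clear_value a bb
    have hab : a ≤ bb := by rw [hbA]; linarith [hP.le]
    have haI : a ∈ Icc (0:ℝ) T := ⟨ha0, le_trans hab hkT⟩
    have hbI : bb ∈ Icc (0:ℝ) T := ⟨le_trans ha0 hab, hkT⟩
    have hτI : τ ∈ Icc (0:ℝ) T := ⟨le_trans ha0 hτ.1, le_trans hτ.2 hkT⟩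
    have hb : ‖∫ s in a..bb, Q s (z τ)‖ ≤ abs (∫ s in a..bb, (X + Kt*X*|τ - s|)) := by
      apply intervalIntegral.norm_integral_le_abs_of_norm_le
      · filter_upwards [ae_restrict_mem measurableSet_uIoc,
          ae_mono (Measure.restrict_mono (hsubIoc haI hbI) le_rfl) hX] with s hs hsX
        have hsI : s ∈ Icc (0:ℝ) T := hsubIoc haI hbI hs
        have hd : ‖Q s (z τ) - Q s (z s)‖ ≤ Kt * (X * |τ - s|) := by
          calc ‖Q s (z τ) - Q s (z s)‖ ≤ Kt * ‖z τ - z s‖ := hQlip s hsI.1 _ _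
            _ ≤ Kt * (X * |τ - s|) :=
                mul_le_mul_of_nonneg_left (hzlip s τ hsI hτI) hKt0
        calc ‖Q s (z τ)‖ = ‖Q s (z s) + (Q s (z τ) - Q s (z s))‖ := by
              congr 1; abel
          _ ≤ ‖Q s (z s)‖ + ‖Q s (z τ) - Q s (z s)‖ := norm_add_le _ _
          _ ≤ X + Kt*X*|τ - s| := by
              have h := add_le_add hsX hd
              linarith
      · exact ((continuous_const.add
          (continuous_const.mul ((continuous_const.sub continuous_id).abs))).intervalIntegrable a bb)
    have hcalc : ∫ s in a..bb, (X + Kt*X*|τ - s|) =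
        P*X + Kt*X*(((τ-a)^2 + (bb-τ)^2)/2) := by
      have hint2 : IntervalIntegrable (fun s => Kt*X*|τ - s|) volume a bb :=
        (continuous_const.mul ((continuous_const.sub continuous_id).abs)).intervalIntegrable a bb
      rw [intervalIntegral.integral_add intervalIntegrable_const hint2,
        intervalIntegral.integral_const, intervalIntegral.integral_const_mul,
        integral_abs_sub_eq a bb τ hτ.1 hτ.2, smul_eq_mul,
        show bb - a = P by rw [hbA]; ring]
    rw [hval, hcalc, norm_smul, Real.norm_eq_abs, abs_of_pos hP] at hb
    have hquad : (τ-a)^2 + (bb-τ)^2 ≤ P^2 := by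
      have h1 : 0 ≤ τ - a := by linarith [hτ.1]
      have h2 : 0 ≤ bb - τ := by linarith [hτ.2]
      have h3 : (τ - a) + (bb - τ) = P := by rw [hbA]; ring
      nlinarith [h1, h2, h3]
    have hKX : 0 ≤ Kt*X := mul_nonneg hKt0 hX0
    have habs : abs (P*X + Kt*X*(((τ-a)^2 + (bb-τ)^2)/2)) =
        P*X + Kt*X*(((τ-a)^2 + (bb-τ)^2)/2) := by
      apply abs_of_nonneg
      have h1 : 0 ≤ (τ-a)^2 + (bb-τ)^2 := by positivity
      have h2 : 0 ≤ P*X := mul_nonneg hP.le hX0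
      nlinarith [h1, hKX, h2]
    rw [habs] at hb
    nlinarith [norm_nonneg (Qt (z τ)), hP, hb, hquad, hKX]
  -- main assembly
  intro t ht
  obtain ⟨ht0, htT⟩ := ht
  set Kn := ⌊t / P⌋₊ with hKndef
  have hfl : (Kn:ℝ) ≤ t / P := Nat.floor_le (div_nonneg ht0 hP.le)
  have hKn1 : (Kn:ℝ) * P ≤ t := by
    have h := mul_le_mul_of_nonneg_right hfl hP.le
    rwa [div_mul_cancel₀ t hP.ne'] at h
  have hfl2 : t / P < (Kn:ℝ) + 1 := Nat.lt_floor_add_one (t / P)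
  have hKn2 : t < ((Kn:ℝ)+1) * P := by
    have h := mul_lt_mul_of_pos_right hfl2 hP
    rwa [div_mul_cancel₀ t hP.ne'] at h
  have hmemP : ∀ k : ℕ, (k:ℝ) ≤ (Kn:ℝ) → ((k:ℝ)*P) ∈ Icc (0:ℝ) T := by
    intro k hk
    refine ⟨by positivity, ?_⟩
    calc (k:ℝ)*P ≤ (Kn:ℝ)*P := mul_le_mul_of_nonneg_right hk hP.le
      _ ≤ t := hKn1
      _ ≤ T := htT
  have hDii : ∀ u v, u ∈ Icc (0:ℝ) T → v ∈ Icc (0:ℝ) T →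
      IntervalIntegrable (fun τ => g τ - Qt (z τ)) volume u v :=
    fun u v hu hv => (hgii u v hu hv).sub (hGii u v hu hv)
  have h0I : (0:ℝ) ∈ Icc (0:ℝ) T := ⟨le_refl 0, hT.le⟩
  have htI : t ∈ Icc (0:ℝ) T := ⟨ht0, htT⟩
  have hKnI : ((Kn:ℝ)*P) ∈ Icc (0:ℝ) T := hmemP Kn le_rfl
  have hrwRHS : Kt*X*T^2/(2*(N:ℝ)) = Kt*X*P*T/2 := by
    rw [hPdef]; field_simp
  have key : ‖∫ τ in (0:ℝ)..t, (g τ - Qt (z τ))‖ ≤ 2*P*X + Kt*X*T^2/(2*(N:ℝ)) := by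
    set ν : ℕ → ℝ := fun k => (k:ℝ)*P with hν
    have hν0 : ν 0 = 0 := by rw [hν]; push_cast; ring
    have hνKn : ν Kn = (Kn:ℝ)*P := rfl
    have hint : ∀ k < Kn, IntervalIntegrable (fun τ => g τ - Qt (z τ)) volume (ν k) (ν (k+1)) := by
      intro k hk
      have hk1 : (k:ℝ) ≤ (Kn:ℝ) := by exact_mod_cast Nat.le_of_lt hk
      exact hDii (ν k) (ν (k+1)) (hmemP k hk1)
        (hmemP (k+1) (by exact_mod_cast Nat.succ_le_of_lt hk))
    have hsum := intervalIntegral.sum_integral_adjacent_intervals (a := ν) (μ := volume)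
      (n := Kn) hint
    rw [hν0, hνKn] at hsum
    have hadd := intervalIntegral.integral_add_adjacent_intervals
      (hDii 0 ((Kn:ℝ)*P) h0I hKnI) (hDii ((Kn:ℝ)*P) t hKnI htI)
    have hdecomp : ∫ τ in (0:ℝ)..t, (g τ - Qt (z τ)) =
        (∑ k ∈ Finset.range Kn, ∫ τ in (ν k)..(ν (k+1)), (g τ - Qt (z τ))) +
          ∫ τ in ((Kn:ℝ)*P)..t, (g τ - Qt (z τ)) := by
      rw [hsum, hadd]
    rw [hdecomp]
    have hterm : ∀ k ∈ Finset.range Kn,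
        ‖∫ τ in (ν k)..(ν (k+1)), (g τ - Qt (z τ))‖ ≤ Kt*X*P^2/2 := by
      intro k hk
      rw [Finset.mem_range] at hk
      have hcast : ν (k+1) = ((k:ℝ)+1)*P := by rw [hν]; push_cast; ring
      have hkT : ((k:ℝ)+1)*P ≤ T := by
        have h1 : ((k:ℝ)+1) ≤ (Kn:ℝ) := by exact_mod_cast Nat.succ_le_of_lt hk
        calc ((k:ℝ)+1)*P ≤ (Kn:ℝ)*P := mul_le_mul_of_nonneg_right h1 hP.le
          _ ≤ t := hKn1
          _ ≤ T := htT
      rw [show ν k = (k:ℝ)*P from rfl, hcast]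
      exact hperiod k hkT
    have htail : ‖∫ τ in ((Kn:ℝ)*P)..t, (g τ - Qt (z τ))‖ ≤
        (t - (Kn:ℝ)*P) * (2*X + Kt*X*P/2) := by
      rcases eq_or_lt_of_le hKn1 with heq | hlt
      · rw [← heq]
        simp
      · have hNP : (N:ℝ)*P = T := by rw [hPdef]; field_simp
        have hKnT : ((Kn:ℝ)+1)*P ≤ T := by
          have hKnltN : (Kn:ℝ) < (N:ℝ) := by
            by_contra hcon
            push_neg at hcon
            have h := mul_le_mul_of_nonneg_right hcon hP.le
            rw [hNP] at h
            linarith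
          have hnat : Kn + 1 ≤ N := by exact_mod_cast hKnltN
          have h2 : ((Kn:ℝ)+1) ≤ (N:ℝ) := by exact_mod_cast hnat
          calc ((Kn:ℝ)+1)*P ≤ (N:ℝ)*P := mul_le_mul_of_nonneg_right h2 hP.le
            _ = T := hNP
        have hconst : ∀ᵐ τ ∂(volume.restrict (Ι ((Kn:ℝ)*P) t)),
            ‖g τ - Qt (z τ)‖ ≤ 2*X + Kt*X*P/2 := by
          filter_upwards [ae_restrict_mem measurableSet_uIoc,
            ae_mono (Measure.restrict_mono (hsubIoc hKnI htI) le_rfl) hX] with τ hτ hτX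
          rw [uIoc_of_le hKn1] at hτ
          have hQtb := htailQt Kn hKnT τ ⟨le_of_lt hτ.1, le_trans hτ.2 hKn2.le⟩
          calc ‖g τ - Qt (z τ)‖ ≤ ‖g τ‖ + ‖Qt (z τ)‖ := norm_sub_le _ _
            _ ≤ X + (X + Kt*X*P/2) := add_le_add hτX hQtb
            _ = 2*X + Kt*X*P/2 := by ring
        have hb := intervalIntegral.norm_integral_le_abs_of_norm_le hconst intervalIntegrable_const
        rw [intervalIntegral.integral_const, smul_eq_mul] at hb
        have hnn : 0 ≤ (t - (Kn:ℝ)*P) := by linarith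
        have hcnn : 0 ≤ 2*X + Kt*X*P/2 := by
          have h := mul_nonneg (mul_nonneg hKt0 hX0) hP.le
          linarith
        rwa [abs_of_nonneg (mul_nonneg hnn hcnn)] at hb
    calc ‖(∑ k ∈ Finset.range Kn, ∫ τ in (ν k)..(ν (k+1)), (g τ - Qt (z τ))) +
            ∫ τ in ((Kn:ℝ)*P)..t, (g τ - Qt (z τ))‖
        ≤ ‖∑ k ∈ Finset.range Kn, ∫ τ in (ν k)..(ν (k+1)), (g τ - Qt (z τ))‖ +
            ‖∫ τ in ((Kn:ℝ)*P)..t, (g τ - Qt (z τ))‖ := norm_add_le _ _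
      _ ≤ (∑ k ∈ Finset.range Kn, ‖∫ τ in (ν k)..(ν (k+1)), (g τ - Qt (z τ))‖) +
            (t - (Kn:ℝ)*P) * (2*X + Kt*X*P/2) := add_le_add (norm_sum_le _ _) htail
      _ ≤ (∑ _k ∈ Finset.range Kn, Kt*X*P^2/2) + (t - (Kn:ℝ)*P) * (2*X + Kt*X*P/2) :=
          add_le_add (Finset.sum_le_sum hterm) le_rfl
      _ = ((Kn:ℝ)*P)*(Kt*X*P/2) + (t - (Kn:ℝ)*P) * (2*X + Kt*X*P/2) := by
          rw [Finset.sum_const, Finset.card_range, nsmul_eq_mul]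
          ring
      _ ≤ 2*P*X + Kt*X*T^2/(2*(N:ℝ)) := by
          rw [hrwRHS]
          have hδ1 : t - (Kn:ℝ)*P ≤ P := by linarith
          have hδ0 : 0 ≤ t - (Kn:ℝ)*P := by linarith
          have hKX : 0 ≤ Kt*X := mul_nonneg hKt0 hX0
          nlinarith [mul_nonneg hX0 (show (0:ℝ) ≤ P - (t - (Kn:ℝ)*P) by linarith),
            mul_nonneg (mul_nonneg hKX hP.le) (show (0:ℝ) ≤ T - t by linarith)]
  have hsplitfin : ∫ τ in (0:ℝ)..t, (g τ - Qt (z τ)) =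
      (∫ τ in (0:ℝ)..t, g τ) - ∫ τ in (0:ℝ)..t, Qt (z τ) :=
    intervalIntegral.integral_sub (hgii 0 t h0I htI) (hGii 0 t h0I htI)
  rw [hsplitfin] at key
  exact key
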